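/- For every natural number n, every point p = (θ, z) ∈ ℝ × ℂ and every tangent vector v = (τ, w) ∈ ℝ × ℂ, writing (τ', w') for the Fréchet derivative of G_n at p applied to v and (θ', z') = G_n(p), one has τ' + Im(conj(z')·w') = (1 + n·‖z‖²)⁻¹ · (τ + Im(conj(z)·w)). Equivalently, the pullback of the 1-form α under G_n equals (1 + n r²)⁻¹ · α, so G_n preserves the hyperplane field ker α and is a contactomorphism onto its image. -/

import Mathlib

/-- For every `n : ℕ`, every point `p = (θ, z) ∈ ℝ × ℂ` and every tangent vector
`v = (τ, w)`, writing `(τ', w')` for the Fréchet derivative of `G_n` at `p` applied to `v`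
and `(θ', z') = G_n(p)`, one has
`τ' + Im(conj(z')·w') = (1 + n‖z‖²)⁻¹ · (τ + Im(conj(z)·w))`;
i.e. the pullback of the contact form `α` under `G_n` is `(1 + n r²)⁻¹ · α`. -/
theorem Gn_pullback_contact_form (n : ℕ) (G : ℝ × ℂ → ℝ × ℂ)
    (hG : G = fun p : ℝ × ℂ =>
      (p.1, (((1 + (n : ℝ) * ‖p.2‖ ^ 2) ^ (-(1 / 2) : ℝ) : ℝ) : ℂ) *
        Complex.exp (-(Complex.I * (n : ℂ) * (p.1 : ℂ))) * p.2))
    (p v : ℝ × ℂ) :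
    (fderiv ℝ G p v).1 + ((starRingEnd ℂ) (G p).2 * (fderiv ℝ G p v).2).im =
      (1 + (n : ℝ) * ‖p.2‖ ^ 2)⁻¹ * (v.1 + ((starRingEnd ℂ) p.2 * v.2).im) := by
  have hpos : (0:ℝ) < 1 + (n:ℝ) * ‖p.2‖^2 := by positivity
  have h1 : HasFDerivAt (fun q : ℝ × ℂ => ‖q.2‖^2)
      ((2:ℕ) • (innerSL ℝ p.2).comp (ContinuousLinearMap.snd ℝ ℝ ℂ)) p :=
    (hasFDerivAt_snd).norm_sq
  have h2 := (h1.const_mul (n:ℝ)).const_add 1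
  have h3 := h2.rpow_const (p := (-(1/2) : ℝ)) (Or.inl hpos.ne')
  have h4 := Complex.ofRealCLM.hasFDerivAt.comp p h3
  have h5 : HasDerivAt (fun θ : ℝ => Complex.exp (-(Complex.I * n * θ)))
      (-(Complex.I * n) * Complex.exp (-(Complex.I * n * p.1))) p.1 := by
    have h0 : HasDerivAt (fun θ : ℝ => -(Complex.I * (n:ℂ) * (θ:ℂ))) (-(Complex.I * n)) p.1 := by
      simpa [Pi.neg_def] using (((hasDerivAt_id p.1).ofReal_comp).const_mul (Complex.I * (n:ℂ))).neg
    simpa [mul_comm] using h0.cexp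
  have h6 := h5.hasFDerivAt.comp p (hasFDerivAt_fst (p := p) (𝕜 := ℝ))
  have h7 := (h4.mul h6).mul (hasFDerivAt_snd (p := p) (𝕜 := ℝ))
  have h8 := HasFDerivAt.prodMk (hasFDerivAt_fst (p := p) (𝕜 := ℝ)) h7
  have h9 : HasFDerivAt G ((ContinuousLinearMap.fst ℝ ℝ ℂ).prod (((((1 + (n:ℝ) * ‖p.2‖^2)^(-(1/2):ℝ) : ℝ) : ℂ) * Complex.exp (-(Complex.I * n * p.1))) • ContinuousLinearMap.snd ℝ ℝ ℂ + p.2 • ((((1 + (n:ℝ) * ‖p.2‖^2)^(-(1/2):ℝ) : ℝ) : ℂ) • (ContinuousLinearMap.smulRight (1 : ℝ →L[ℝ] ℝ) (-(Complex.I * n) * Complex.exp (-(Complex.I * n * p.1)))).comp (ContinuousLinearMap.fst ℝ ℝ ℂ) + Complex.exp (-(Complex.I * n * p.1)) • Complex.ofRealCLM.comp ((-(1/2) * (1 + (n:ℝ) * ‖p.2‖^2)^((-(1/2):ℝ)-1)) • ((n:ℝ) • ((2:ℕ) • (innerSL ℝ p.2).comp (ContinuousLinearMap.snd ℝ ℝ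 ℂ))))))) p := by
    rw [hG]; exact h8
  rw [h9.fderiv, hG]
  simp only [ContinuousLinearMap.prod_apply, ContinuousLinearMap.add_apply,
    ContinuousLinearMap.coe_smul', Pi.smul_apply, ContinuousLinearMap.coe_comp',
    Function.comp_apply, ContinuousLinearMap.coe_fst', ContinuousLinearMap.coe_snd',
    ContinuousLinearMap.smulRight_apply, ContinuousLinearMap.one_apply,
    Complex.ofRealCLM_apply, innerSL_apply_apply, smul_eq_mul, Complex.real_smul]
  set s : ℝ := ‖p.2‖ ^ 2 with hsdef
  set c : ℝ := (1 + (n:ℝ) * s) ^ (-(1/2) : ℝ) with hcdef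
  set E : ℂ := Complex.exp (-(Complex.I * n * p.1)) with hEdef
  set D : ℝ := -(1/2) * (1 + (n:ℝ) * s) ^ ((-(1/2) : ℝ) - 1) * ((n:ℝ) * (2 • inner ℝ p.2 v.2)) with hDdef
  have hEE : (starRingEnd ℂ) E * E = 1 := by
    rw [hEdef, ← Complex.exp_conj, ← Complex.exp_add]
    simp [Complex.conj_I]
  have hzz : (starRingEnd ℂ) p.2 * p.2 = (s : ℂ) := by
    rw [mul_comm, Complex.mul_conj, hsdef]
    norm_cast
    rw [Complex.normSq_eq_norm_sq]
  have key : (starRingEnd ℂ) ((c:ℂ) * E * p.2) *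
      ((c:ℂ) * E * v.2 + p.2 * ((c:ℂ) * ((v.1:ℂ) * (-(Complex.I * n) * E)) + E * (D:ℂ)))
      = (c:ℂ)*(c:ℂ)*((starRingEnd ℂ) p.2 * v.2) + (c:ℂ)*(c:ℂ)*(s:ℂ)*(-(Complex.I * n * v.1))
        + (c:ℂ)*(D:ℂ)*(s:ℂ) := by
    simp only [map_mul, Complex.conj_ofReal]
    linear_combination ((c:ℂ)*(c:ℂ)*((starRingEnd ℂ) p.2)*v.2
        + (c:ℂ)*(c:ℂ)*(v.1:ℂ)*(-(Complex.I * n))*((starRingEnd ℂ) p.2 * p.2)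
        + (c:ℂ)*(D:ℂ)*((starRingEnd ℂ) p.2 * p.2)) * hEE
      + ((c:ℂ)*(c:ℂ)*(v.1:ℂ)*(-(Complex.I * n)) + (c:ℂ)*(D:ℂ)) * hzz
  rw [key]
  have hc2 : c * c * (1 + (n:ℝ) * s) = 1 := by
    rw [hcdef, ← Real.rpow_add hpos]
    norm_num
    rw [Real.rpow_neg_one]
    field_simp
  have him : ((c:ℂ)*(c:ℂ)*((starRingEnd ℂ) p.2 * v.2) + (c:ℂ)*(c:ℂ)*(s:ℂ)*(-(Complex.I * n * v.1))
        + (c:ℂ)*(D:ℂ)*(s:ℂ)).im = c*c*((starRingEnd ℂ) p.2 * v.2).im - c*c*s*(n*v.1) := by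
    simp [Complex.add_im, Complex.mul_im, Complex.ofReal_re, Complex.ofReal_im]
    ring
  rw [him]
  have hinv : (1 + (n:ℝ) * s)⁻¹ = c * c := (eq_inv_of_mul_eq_one_left hc2).symm
  rw [hinv]
  linear_combination (-v.1) * hc2
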